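/- Let n, r ≥ 1 and k₁, …, k_r ≥ 1 be natural numbers with k₁ + ⋯ + k_r ≤ n + 1. Let ℓ₁, …, ℓ_r be nonzero, pairwise non-proportional linear forms in ℂ[X,Y], and for each i let m_i be a nonzero linear form non-proportional to ℓ_i. Then the binary forms {ℓ_i^{n−j} m_i^j : 1 ≤ i ≤ r, 0 ≤ j ≤ k_i − 1} are linearly independent over ℂ. -/

import Mathlib

open MvPolynomial

/-- The linear form `a*X + b*Y` in `ℂ[X,Y]`. -/
noncomputable def lin (a b : ℂ) : MvPolynomial (Fin 2) ℂ :=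
  MvPolynomial.C a * MvPolynomial.X 0 + MvPolynomial.C b * MvPolynomial.X 1

/-- The partial derivative `∂_X` (for `i = 0`) or `∂_Y` (for `i = 1`) as a linear map. -/
noncomputable def pd (i : Fin 2) :
    MvPolynomial (Fin 2) ℂ →ₗ[ℂ] MvPolynomial (Fin 2) ℂ :=
  (MvPolynomial.pderiv i).toLinearMap

/-- The apolarity operator `q(∂) = Σ q_{ij} ∂_X^i ∂_Y^j`, as a linear map on `ℂ[X,Y]`. -/
noncomputable def apolarL (q : MvPolynomial (Fin 2) ℂ) :
    MvPolynomial (Fin 2) ℂ →ₗ[ℂ] MvPolynomial (Fin 2) ℂ :=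
  q.support.sum fun m => q.coeff m • (pd 0 ^ m 0 * pd 1 ^ m 1)

/-- The apolarity pairing `⟨q, p⟩`: the value of the constant polynomial `q(∂)p`. -/
noncomputable def pairing (q p : MvPolynomial (Fin 2) ℂ) : ℂ :=
  MvPolynomial.coeff 0 (apolarL q p)

/- ### Auxiliary development -/

local notation "MvC" => MvPolynomial (Fin 2) ℂ

/-- The derivation `y ∂_X - x ∂_Y`, which annihilates `lin x y`. -/
noncomputable def Dlin (x y : ℂ) : Derivation ℂ MvC MvC :=
  y • MvPolynomial.pderiv 0 - x • MvPolynomial.pderiv 1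

lemma Dlin_lin (x y a b : ℂ) : Dlin x y (lin a b) = C (y * a - x * b) := by
  simp [Dlin, lin, pderiv_X, smul_eq_C_mul]

lemma Dlin_self (x y : ℂ) : Dlin x y (lin x y) = 0 := by
  rw [Dlin_lin, show y * x - x * y = 0 by ring, map_zero]

lemma smul_lin (t a b : ℂ) : t • lin a b = lin (t * a) (t * b) := by
  simp [lin, smul_eq_C_mul, C_mul]; ring

lemma eval_lin (a b x y : ℂ) : eval ![x, y] (lin a b) = a * x + b * y := by
  simp [lin]

lemma lin_ne_zero {a b : ℂ} (h : (a, b) ≠ (0, 0)) : lin a b ≠ 0 := by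
  intro h0
  apply h
  have h1 := congrArg (eval ![1, 0]) h0
  have h2 := congrArg (eval ![0, 1]) h0
  simp [eval_lin] at h1 h2
  simp [h1, h2]

lemma exists_prop_of_det {a b a' b' : ℂ} (h : (a, b) ≠ (0, 0))
    (hdet : b * a' - a * b' = 0) : ∃ t : ℂ, lin a' b' = t • lin a b := by
  by_cases ha : a = 0
  · have hb : b ≠ 0 := by
      intro hb; exact h (by simp [ha, hb])
    have ha' : a' = 0 := by
      have hba : b * a' = 0 := by rw [ha] at hdet; linear_combination hdet
      rcases mul_eq_zero.mp hba with h1 | h1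
      · exact absurd h1 hb
      · exact h1
    refine ⟨b' / b, ?_⟩
    rw [smul_lin, ha, ha']
    field_simp
    simp
  · refine ⟨a' / a, ?_⟩
    rw [smul_lin]
    have hb' : b' = b * a' / a := by field_simp; linear_combination -hdet
    rw [hb']
    field_simp

lemma D_mul_pow (D : Derivation ℂ MvC MvC) (p q : MvC) (α γ : ℂ)
    (hp : D p = C α) (hq : D q = C γ) (s t : ℕ) :
    D (p ^ s * q ^ t) =
      ((s : ℂ) * α) • (p ^ (s - 1) * q ^ t) + ((t : ℂ) * γ) • (p ^ s * q ^ (t - 1)) := by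
  rw [Derivation.leibniz, Derivation.leibniz_pow, Derivation.leibniz_pow, hp, hq]
  simp only [smul_eq_C_mul, smul_eq_mul, nsmul_eq_mul]
  rw [C_mul, C_mul, C_eq_coe_nat, C_eq_coe_nat]
  ring

lemma Dpow_mul_pow (D : Derivation ℂ MvC MvC) (p q : MvC) (γ : ℂ)
    (hp : D p = 0) (hq : D q = C γ) :
    ∀ u s t : ℕ, (D.toLinearMap ^ u) (p ^ s * q ^ t) =
      ((t.descFactorial u : ℂ) * γ ^ u) • (p ^ s * q ^ (t - u)) := by
  intro u
  induction u with
  | zero => intro s t; simp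
  | succ u ih =>
    intro s t
    rw [pow_succ, Module.End.mul_apply]
    rw [show D.toLinearMap (p ^ s * q ^ t) = D (p ^ s * q ^ t) from rfl,
      D_mul_pow D p q 0 γ (by rw [hp, map_zero]) hq]
    simp only [mul_zero, zero_smul, zero_add, map_smul, ih]
    rw [smul_smul]
    congr 1
    · cases t with
      | zero => simp
      | succ t => rw [Nat.succ_descFactorial_succ]; push_cast; ring
    · congr 2
      omega

lemma Dpow_pow (D : Derivation ℂ MvC MvC) (q : MvC) (γ : ℂ) (hq : D q = C γ)
    (u t : ℕ) : (D.toLinearMap ^ u) (q ^ t) =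
      ((t.descFactorial u : ℂ) * γ ^ u) • q ^ (t - u) := by
  have h := Dpow_mul_pow D 1 q γ (by simp) hq u 0 t
  simpa using h

/-- The span of the `p^s q^t` with `t < K`. -/
noncomputable def Wsp (p q : MvC) (K : ℕ) : Submodule ℂ MvC :=
  Submodule.span ℂ {f | ∃ s t : ℕ, t < K ∧ f = p ^ s * q ^ t}

lemma mem_Wsp (p q : MvC) {K s t : ℕ} (ht : t < K) : p ^ s * q ^ t ∈ Wsp p q K :=
  Submodule.subset_span ⟨s, t, ht, rfl⟩

lemma Wsp_invariant (D : Derivation ℂ MvC MvC) (p q : MvC) (α γ : ℂ)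
    (hp : D p = C α) (hq : D q = C γ) (K : ℕ) {w : MvC} (hw : w ∈ Wsp p q K) :
    D w ∈ Wsp p q K := by
  induction hw using Submodule.span_induction with
  | mem x hx =>
    obtain ⟨s, t, ht, rfl⟩ := hx
    rw [D_mul_pow D p q α γ hp hq]
    exact add_mem (Submodule.smul_mem _ _ (mem_Wsp _ _ ht))
      (Submodule.smul_mem _ _ (mem_Wsp _ _ (lt_of_le_of_lt (Nat.sub_le t 1) ht)))
  | zero => rw [map_zero]; exact zero_mem _
  | add x y _ _ hx hy => rw [map_add]; exact add_mem hx hy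
  | smul c x _ hx => rw [Derivation.map_smul]; exact Submodule.smul_mem _ _ hx

lemma Wsp_invariant_pow (D : Derivation ℂ MvC MvC) (p q : MvC) (α γ : ℂ)
    (hp : D p = C α) (hq : D q = C γ) (K : ℕ) (u : ℕ) {w : MvC} (hw : w ∈ Wsp p q K) :
    (D.toLinearMap ^ u) w ∈ Wsp p q K := by
  induction u with
  | zero => simpa using hw
  | succ u ih =>
    rw [pow_succ', Module.End.mul_apply]
    exact Wsp_invariant D p q α γ hp hq K ih

lemma Dpow_kill_Wsp (D : Derivation ℂ MvC MvC) (p q : MvC) (γ : ℂ)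
    (hp : D p = 0) (hq : D q = C γ) (K : ℕ) {w : MvC} (hw : w ∈ Wsp p q K) :
    (D.toLinearMap ^ K) w = 0 := by
  have hle : Wsp p q K ≤ LinearMap.ker (D.toLinearMap ^ K) := by
    rw [Wsp, Submodule.span_le]
    rintro f ⟨s, t, ht, rfl⟩
    rw [SetLike.mem_coe, LinearMap.mem_ker, Dpow_mul_pow D p q γ hp hq K s t,
      Nat.descFactorial_eq_zero_iff_lt.mpr ht]
    simp
  exact LinearMap.mem_ker.mp (hle hw)

lemma exists_kill {r : ℕ} (k : Fin r → ℕ) (a b c d : Fin r → ℂ) (i₀ : Fin r)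
    (hα : ∀ i, i ≠ i₀ → b i * a i₀ - a i * b i₀ ≠ 0) :
    ∀ S : Finset (Fin r), i₀ ∉ S →
    ∃ E : MvC →ₗ[ℂ] MvC,
      (∀ i, ∀ w ∈ Wsp (lin (a i) (b i)) (lin (c i) (d i)) (k i),
        E w ∈ Wsp (lin (a i) (b i)) (lin (c i) (d i)) (k i)) ∧
      (∀ i ∈ S, ∀ w ∈ Wsp (lin (a i) (b i)) (lin (c i) (d i)) (k i), E w = 0) ∧
      (∀ s : ℕ, (∑ i ∈ S, k i) ≤ s → ∃ cc : ℂ, cc ≠ 0 ∧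
        E (lin (a i₀) (b i₀) ^ s) = cc • lin (a i₀) (b i₀) ^ (s - ∑ i ∈ S, k i)) := by
  intro S
  induction S using Finset.cons_induction with
  | empty =>
    intro _
    exact ⟨LinearMap.id, fun i w hw => hw, by simp, fun s _ => ⟨1, one_ne_zero, by simp⟩⟩
  | cons i S hiS ih =>
    intro hi0
    have hi0' : i ≠ i₀ ∧ i₀ ∉ S := by
      constructor
      · rintro rfl; exact hi0 (Finset.mem_cons_self _ _)
      · intro h; exact hi0 (Finset.mem_cons.mpr (Or.inr h))
    obtain ⟨E', hinv, hkill, hact⟩ := ih hi0'.2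
    set D := Dlin (a i) (b i) with hD
    refine ⟨(D.toLinearMap ^ k i) ∘ₗ E', ?_, ?_, ?_⟩
    · intro i' w hw
      rw [LinearMap.comp_apply]
      exact Wsp_invariant_pow D _ _ _ _ (Dlin_lin _ _ _ _) (Dlin_lin _ _ _ _) _ _
        (hinv i' w hw)
    · intro i' hi' w hw
      rw [LinearMap.comp_apply]
      rcases Finset.mem_cons.mp hi' with rfl | hi'S
      · exact Dpow_kill_Wsp D _ _ _ (Dlin_self _ _) (Dlin_lin _ _ _ _) _ (hinv i' w hw)
      · rw [hkill i' hi'S w hw, map_zero]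
    · intro s hs
      rw [Finset.sum_cons] at hs
      obtain ⟨cc', hcc', hE'⟩ := hact s (by omega)
      set α : ℂ := b i * a i₀ - a i * b i₀ with hαdef
      have hαne : α ≠ 0 := hα i hi0'.1
      have hdesc : k i ≤ s - ∑ i' ∈ S, k i' := by omega
      refine ⟨cc' * (((s - ∑ i' ∈ S, k i').descFactorial (k i) : ℂ) * α ^ k i), ?_, ?_⟩
      · apply mul_ne_zero hcc'
        apply mul_ne_zero _ (pow_ne_zero _ hαne)
        rw [Nat.cast_ne_zero]
        intro h0
        exact absurd (Nat.descFactorial_eq_zero_iff_lt.mp h0) (by omega)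
      · rw [LinearMap.comp_apply, hE', map_smul,
          Dpow_pow D _ α (Dlin_lin _ _ _ _) (k i) _]
        rw [smul_smul, Finset.sum_cons]
        congr 2
        omega

/-- Confluent Vandermonde independence: the forms ℓ_i^(n−j) * m_i^j for 1 ≤ i ≤ r and
0 ≤ j ≤ k_i − 1 are linearly independent when k_1 + ⋯ + k_r ≤ n + 1. -/
theorem osculating_planes_linearIndependent
    (n r : ℕ) (hn : 1 ≤ n) (hr : 1 ≤ r) (k : Fin r → ℕ) (hk : ∀ i, 1 ≤ k i)
    (hsum : ∑ i, k i ≤ n + 1)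
    (a b c d : Fin r → ℂ)
    (hl : ∀ i, (a i, b i) ≠ (0, 0))
    (hm : ∀ i, (c i, d i) ≠ (0, 0))
    (hprop : ∀ i j, i ≠ j → ∀ t : ℂ, lin (a i) (b i) ≠ t • lin (a j) (b j))
    (hmprop : ∀ i, ∀ t : ℂ, lin (c i) (d i) ≠ t • lin (a i) (b i)) :
    LinearIndependent ℂ (fun p : Σ i : Fin r, Fin (k i) =>
      lin (a p.1) (b p.1) ^ (n - (p.2 : ℕ)) * lin (c p.1) (d p.1) ^ (p.2 : ℕ)) := by
  classical
  have hα : ∀ i₀ i : Fin r, i ≠ i₀ → b i * a i₀ - a i * b i₀ ≠ 0 := by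
    intro i₀ i hne hdet
    obtain ⟨t, ht⟩ := exists_prop_of_det (hl i) hdet
    exact hprop i₀ i (Ne.symm hne) t ht
  have hβ : ∀ i, b i * c i - a i * d i ≠ 0 := by
    intro i hdet
    obtain ⟨t, ht⟩ := exists_prop_of_det (hl i) hdet
    exact hmprop i t ht
  rw [Fintype.linearIndependent_iff]
  intro g hg
  have CORE : ∀ (i₀ : Fin r) (j : Fin (k i₀)),
      (∀ j' : Fin (k i₀), (j : ℕ) < (j' : ℕ) → g ⟨i₀, j'⟩ = 0) → g ⟨i₀, j⟩ = 0 := by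
    intro i₀ j hup
    obtain ⟨E, hinv, hkill, hact⟩ := exists_kill k a b c d i₀ (fun i hi => hα i₀ i hi)
      (Finset.univ.erase i₀) (Finset.notMem_erase _ _)
    set K := ∑ i ∈ Finset.univ.erase i₀, k i with hK
    have hKsum : K + k i₀ = ∑ i, k i := Finset.sum_erase_add _ _ (Finset.mem_univ i₀)
    set D0 := Dlin (a i₀) (b i₀) with hD0
    set T : MvC →ₗ[ℂ] MvC := E ∘ₗ (D0.toLinearMap ^ (j : ℕ)) with hT0
    have hjlt : (j : ℕ) < k i₀ := j.isLt
    have hD0m : D0 (lin (c i₀) (d i₀)) = C (b i₀ * c i₀ - a i₀ * d i₀) := Dlin_lin _ _ _ _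
    have hT := congrArg T hg
    rw [map_sum, map_zero] at hT
    simp only [map_smul] at hT
    rw [Finset.sum_eq_single_of_mem (⟨i₀, j⟩ : Σ i : Fin r, Fin (k i))
      (Finset.mem_univ _) ?side] at hT
    case side =>
      rintro ⟨i, t⟩ - hne
      by_cases hii : i = i₀
      · subst hii
        have htj : (t : ℕ) ≠ (j : ℕ) := by
          intro h
          exact hne (congrArg (fun z => (⟨i, z⟩ : Σ i : Fin r, Fin (k i))) (Fin.ext h))
        rcases lt_or_gt_of_ne htj with hlt | hgt
        · rw [hT0, LinearMap.comp_apply,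
            Dpow_mul_pow D0 _ _ _ (Dlin_self _ _) hD0m (j : ℕ) (n - (t : ℕ)) (t : ℕ),
            Nat.descFactorial_eq_zero_iff_lt.mpr hlt]
          simp
        · rw [hup t hgt, zero_smul]
      · rw [hT0, LinearMap.comp_apply]
        have hvW : lin (a i) (b i) ^ (n - (t : ℕ)) * lin (c i) (d i) ^ (t : ℕ) ∈
            Wsp (lin (a i) (b i)) (lin (c i) (d i)) (k i) := mem_Wsp _ _ t.isLt
        have h1 := Wsp_invariant_pow D0 _ _ _ _ (Dlin_lin (a i₀) (b i₀) (a i) (b i))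
          (Dlin_lin (a i₀) (b i₀) (c i) (d i)) (k i) (j : ℕ) hvW
        rw [hkill i (Finset.mem_erase.mpr ⟨hii, Finset.mem_univ _⟩) _ h1, smul_zero]
    -- main term
    have hs : K ≤ n - (j : ℕ) := by omega
    obtain ⟨cc, hcc, hEeq⟩ := hact (n - (j : ℕ)) hs
    rw [hT0, LinearMap.comp_apply,
      Dpow_mul_pow D0 _ _ _ (Dlin_self _ _) hD0m (j : ℕ) (n - (j : ℕ)) (j : ℕ),
      Nat.sub_self, pow_zero, mul_one, map_smul, hEeq, smul_smul, smul_smul] at hT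
    rcases smul_eq_zero.mp hT with h0 | h0
    · rcases mul_eq_zero.mp h0 with h1 | h1
      · rcases mul_eq_zero.mp h1 with h2 | h2
        · exact h2
        · exfalso
          rcases mul_eq_zero.mp h2 with h3 | h3
          · rw [Nat.descFactorial_self, Nat.cast_eq_zero] at h3
            exact Nat.factorial_ne_zero _ h3
          · exact pow_ne_zero _ (hβ i₀) h3
      · exact absurd h1 hcc
    · exact absurd h0 (pow_ne_zero _ (lin_ne_zero (hl i₀)))
  rintro ⟨i₀, j⟩
  have ALL : ∀ M : ℕ, ∀ j : Fin (k i₀), k i₀ - (j : ℕ) ≤ M → g ⟨i₀, j⟩ = 0 := by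
    intro M
    induction M with
    | zero =>
      intro j hj
      exact absurd hj (by have := j.isLt; omega)
    | succ M ih =>
      intro j hj
      exact CORE i₀ j (fun j' hj' => ih j' (by have := j'.isLt; omega))
  exact ALL (k i₀) j (Nat.sub_le _ _)
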